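/- Fix a system of positive coset-depending weights w. A game c = (c_1,…,c_n) is orthogonal (with respect to the inner product ⟨c,c'⟩ = Σ_{i=1}^n Σ_{s∈S} c_i(s)c'_i(s)) to every coset weighted potential game with respect to w if and only if both of the following hold: (i) for every strategy profile s ∈ S, Σ_{i=1}^n w_i(s_{-i}) c_i(s) = 0; and (ii) for every player i and every s_{-i} ∈ S_{-i}, Σ_{x∈S_i} c_i(x, s_{-i}) = 0. Such games are called coset weighted pure harmonic games. -/

import Mathlib

/-- `f : S → ℝ` depends only on the strategies of the players other than `i`
(i.e. it is a function of `s_{-i}`). -/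
def IndepOf {n : ℕ} {k : Fin n → ℕ} (i : Fin n) (f : (∀ j, Fin (k j)) → ℝ) : Prop :=
  ∀ (s : ∀ j, Fin (k j)) (x : Fin (k i)), f (Function.update s i x) = f s

/-- `P` is a coset weighted potential function for the game `c` with respect to the
coset-depending weights `w`. -/
def IsCWPotentialFn {n : ℕ} {k : Fin n → ℕ} (c w : Fin n → (∀ j, Fin (k j)) → ℝ)
    (P : (∀ j, Fin (k j)) → ℝ) : Prop :=
  ∀ (i : Fin n) (s : ∀ j, Fin (k j)) (x y : Fin (k i)),
    c i (Function.update s i x) - c i (Function.update s i y)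
      = w i s * (P (Function.update s i x) - P (Function.update s i y))

/-- `c` is a coset weighted potential game with respect to `w`. -/
def IsCWPG {n : ℕ} {k : Fin n → ℕ} (w c : Fin n → (∀ j, Fin (k j)) → ℝ) : Prop :=
  ∃ P, IsCWPotentialFn c w P

/-- `c` is a coset weighted pure potential game w.r.t. `w`:
`c_i(s) = w_i(s_{-i}) (P(s) − (1/k_i) Σ_{x ∈ S_i} P(x, s_{-i}))` for some `P`. -/
def IsCWPurePotential {n : ℕ} {k : Fin n → ℕ}
    (w c : Fin n → (∀ j, Fin (k j)) → ℝ) : Prop :=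
  ∃ P : (∀ j, Fin (k j)) → ℝ, ∀ (i : Fin n) (s : ∀ j, Fin (k j)),
    c i s = w i s * (P s - (1 / (k i : ℝ)) * ∑ x : Fin (k i), P (Function.update s i x))

/-- `c` is a non-strategic game. -/
def IsNonStrategic {n : ℕ} {k : Fin n → ℕ} (c : Fin n → (∀ j, Fin (k j)) → ℝ) : Prop :=
  ∀ (i : Fin n) (s : ∀ j, Fin (k j)) (x y : Fin (k i)),
    c i (Function.update s i x) = c i (Function.update s i y)

/-- The inner product `⟨c, c'⟩ = Σ_i Σ_s c_i(s) c'_i(s)` on the space of games. -/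
noncomputable def gameInner {n : ℕ} {k : Fin n → ℕ}
    (c c' : Fin n → (∀ j, Fin (k j)) → ℝ) : ℝ :=
  ∑ i : Fin n, ∑ s : ∀ j, Fin (k j), c i s * c' i s

/-- `c` is a coset weighted pure harmonic game w.r.t. `w`: it is orthogonal to every
coset weighted potential game w.r.t. `w`. -/
def IsCWPureHarmonic {n : ℕ} {k : Fin n → ℕ}
    (w c : Fin n → (∀ j, Fin (k j)) → ℝ) : Prop :=
  ∀ c' : Fin n → (∀ j, Fin (k j)) → ℝ, IsCWPG w c' → gameInner c c' = 0

section
variable {n : ℕ} {k : Fin n → ℕ}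

lemma split_update (i : Fin n) (s : ∀ j, Fin (k j)) (x : Fin (k i)) :
    Equiv.piSplitAt i (fun j => Fin (k j)) (Function.update s i x)
      = (x, (Equiv.piSplitAt i (fun j => Fin (k j)) s).2) := by
  simp only [Equiv.piSplitAt_apply, Function.update_self, Prod.mk.injEq, true_and]
  funext j
  exact Function.update_of_ne j.2 _ _

lemma update_eq_symm (i : Fin n) (s : ∀ j, Fin (k j)) (x : Fin (k i)) :
    Function.update s i x
      = (Equiv.piSplitAt i (fun j => Fin (k j))).symm
          (x, (Equiv.piSplitAt i (fun j => Fin (k j)) s).2) := by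
  rw [← split_update, Equiv.symm_apply_apply]

lemma sum_update (i : Fin n) (g : (∀ j, Fin (k j)) → ℝ) :
    ∑ s : ∀ j, Fin (k j), ∑ x : Fin (k i), g (Function.update s i x)
      = (k i : ℝ) * ∑ s : ∀ j, Fin (k j), g s := by
  set e := Equiv.piSplitAt i (fun j => Fin (k j)) with he
  calc ∑ s : ∀ j, Fin (k j), ∑ x : Fin (k i), g (Function.update s i x)
      = ∑ s : ∀ j, Fin (k j), ∑ x : Fin (k i), g (e.symm (x, (e s).2)) := by
        simp_rw [update_eq_symm]
        rw [he]
    _ = ∑ p : Fin (k i) × (∀ j : {j // j ≠ i}, Fin (k j)),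
          ∑ x : Fin (k i), g (e.symm (x, p.2)) :=
        Equiv.sum_comp e (fun p => ∑ x : Fin (k i), g (e.symm (x, p.2)))
    _ = ∑ y : Fin (k i), ∑ q : (∀ j : {j // j ≠ i}, Fin (k j)),
          ∑ x : Fin (k i), g (e.symm (x, q)) :=
        Fintype.sum_prod_type (f := fun p => ∑ x : Fin (k i), g (e.symm (x, p.2)))
    _ = (k i : ℝ) * ∑ q : (∀ j : {j // j ≠ i}, Fin (k j)),
          ∑ x : Fin (k i), g (e.symm (x, q)) := by
        rw [Finset.sum_const, Finset.card_univ, Fintype.card_fin, nsmul_eq_mul]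
    _ = (k i : ℝ) * ∑ s : ∀ j, Fin (k j), g s := by
        rw [Finset.sum_comm, ← Fintype.sum_prod_type (f := fun p => g (e.symm p)),
          Equiv.sum_comp e.symm g]

end

section
variable {n : ℕ} {k : Fin n → ℕ}

lemma snd_update (i : Fin n) (s : ∀ j, Fin (k j)) (x : Fin (k i)) :
    (Equiv.piSplitAt i (fun j => Fin (k j)) (Function.update s i x)).2
      = (Equiv.piSplitAt i (fun j => Fin (k j)) s).2 := by
  rw [split_update]

end

theorem pure_harmonic_iff' (n : ℕ) (hn : 2 ≤ n) (k : Fin n → ℕ)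
    (hk : ∀ i, 2 ≤ k i) (w : Fin n → (∀ j, Fin (k j)) → ℝ)
    (hw : ∀ i s, 0 < w i s)
    (hwI : ∀ (i : Fin n) (s : ∀ j, Fin (k j)) (x : Fin (k i)),
      w i (Function.update s i x) = w i s)
    (c : Fin n → (∀ j, Fin (k j)) → ℝ)
    (IsCWPG : (Fin n → (∀ j, Fin (k j)) → ℝ) → Prop)
    (hdef : ∀ c', IsCWPG c' ↔ ∃ P : (∀ j, Fin (k j)) → ℝ, ∀ (i : Fin n) (s : ∀ j, Fin (k j)) (x y : Fin (k i)),
      c' i (Function.update s i x) - c' i (Function.update s i y)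
        = w i s * (P (Function.update s i x) - P (Function.update s i y))) :
    (∀ c' : Fin n → (∀ j, Fin (k j)) → ℝ, IsCWPG c' →
        (∑ i : Fin n, ∑ s : ∀ j, Fin (k j), c i s * c' i s) = 0) ↔
      ((∀ s : ∀ j, Fin (k j), ∑ i : Fin n, w i s * c i s = 0) ∧
       (∀ (i : Fin n) (s : ∀ j, Fin (k j)),
          ∑ x : Fin (k i), c i (Function.update s i x) = 0)) := by
  constructor
  · intro H
    constructor
    · intro s₀
      have hP : IsCWPG (fun i s => w i s * (if s = s₀ then (1:ℝ) else 0)) := by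
        rw [hdef]
        refine ⟨fun s => if s = s₀ then 1 else 0, ?_⟩
        intro i s x y
        rw [hwI i s x, hwI i s y]; ring
      have h := H _ hP
      simp only [mul_ite, mul_one, mul_zero, Finset.sum_ite_eq', Finset.mem_univ,
        if_true] at h
      calc ∑ i, w i s₀ * c i s₀ = ∑ i, c i s₀ * w i s₀ :=
            Finset.sum_congr rfl fun i _ => by ring
        _ = 0 := h
    · intro i₀ s₀
      have hP : IsCWPG (fun j s => if j = i₀ then
          (if (Equiv.piSplitAt i₀ (fun j => Fin (k j)) s).2
              = (Equiv.piSplitAt i₀ (fun j => Fin (k j)) s₀).2 then (1:ℝ) else 0) else 0) := by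
        rw [hdef]
        refine ⟨fun _ => 0, ?_⟩
        intro j s x y
        rcases eq_or_ne j i₀ with rfl | hj
        · simp only [snd_update, if_pos rfl, sub_self, mul_zero]
        · simp [hj]
      have h := H _ hP
      have h' : ∑ s : ∀ j, Fin (k j), c i₀ s *
          (if (Equiv.piSplitAt i₀ (fun j => Fin (k j)) s).2
              = (Equiv.piSplitAt i₀ (fun j => Fin (k j)) s₀).2 then (1:ℝ) else 0) = 0 := by
        refine Eq.trans ?_ h
        symm
        calc ∑ i : Fin n, ∑ s : ∀ j, Fin (k j), c i s * (if i = i₀ then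
                (if (Equiv.piSplitAt i₀ (fun j => Fin (k j)) s).2
                  = (Equiv.piSplitAt i₀ (fun j => Fin (k j)) s₀).2 then (1:ℝ) else 0) else 0)
            = ∑ i : Fin n, if i = i₀ then (∑ s : ∀ j, Fin (k j), c i s *
                (if (Equiv.piSplitAt i₀ (fun j => Fin (k j)) s).2
                  = (Equiv.piSplitAt i₀ (fun j => Fin (k j)) s₀).2 then (1:ℝ) else 0)) else 0 := by
              refine Finset.sum_congr rfl fun i _ => ?_
              by_cases hi : i = i₀ <;> simp [hi]
          _ = _ := by
              rw [Finset.sum_ite_eq' Finset.univ i₀, if_pos (Finset.mem_univ i₀)]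
      refine Eq.trans ?_ h'
      calc ∑ x : Fin (k i₀), c i₀ (Function.update s₀ i₀ x)
          = ∑ x : Fin (k i₀),
              ∑ q : (∀ j : {j // j ≠ i₀}, Fin (k j)),
              c i₀ ((Equiv.piSplitAt i₀ (fun j => Fin (k j))).symm (x, q)) *
                (if q = (Equiv.piSplitAt i₀ (fun j => Fin (k j)) s₀).2 then 1 else 0) := by
            refine Finset.sum_congr rfl fun x _ => ?_
            rw [update_eq_symm i₀ s₀ x]
            simp only [mul_ite, mul_one, mul_zero, Finset.sum_ite_eq', Finset.mem_univ,
              if_true]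
        _ = ∑ p : Fin (k i₀) × (∀ j : {j // j ≠ i₀}, Fin (k j)),
              c i₀ ((Equiv.piSplitAt i₀ (fun j => Fin (k j))).symm p) *
                (if p.2 = (Equiv.piSplitAt i₀ (fun j => Fin (k j)) s₀).2 then 1 else 0) :=
            (Fintype.sum_prod_type (f := fun p =>
              c i₀ ((Equiv.piSplitAt i₀ (fun j => Fin (k j))).symm p) *
                (if p.2 = (Equiv.piSplitAt i₀ (fun j => Fin (k j)) s₀).2 then 1 else 0))).symm
        _ = ∑ s : ∀ j, Fin (k j), c i₀ s *
              (if (Equiv.piSplitAt i₀ (fun j => Fin (k j)) s).2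
                  = (Equiv.piSplitAt i₀ (fun j => Fin (k j)) s₀).2 then 1 else 0) := by
            rw [← Equiv.sum_comp (Equiv.piSplitAt i₀ (fun j => Fin (k j))).symm
              (fun s => c i₀ s *
                (if (Equiv.piSplitAt i₀ (fun j => Fin (k j)) s).2
                  = (Equiv.piSplitAt i₀ (fun j => Fin (k j)) s₀).2 then 1 else 0))]
            refine Finset.sum_congr rfl fun p _ => ?_
            rw [Equiv.apply_symm_apply]
  · rintro ⟨h1, h2⟩ c' hc'
    obtain ⟨P, hP⟩ := (hdef c').mp hc'
    have key : ∀ (i : Fin n) (s : ∀ j, Fin (k j)) (x : Fin (k i)),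
        c' i (Function.update s i x) - w i (Function.update s i x) * P (Function.update s i x)
          = c' i s - w i s * P s := by
      intro i s x
      have h := hP i s x (s i)
      rw [Function.update_eq_self, mul_sub] at h
      rw [hwI i s x]
      linarith
    have T1 : ∑ i : Fin n, ∑ s : ∀ j, Fin (k j), c i s * (w i s * P s) = 0 := by
      rw [Finset.sum_comm]
      refine Finset.sum_eq_zero fun s _ => ?_
      calc ∑ i, c i s * (w i s * P s) = ∑ i, (w i s * c i s) * P s :=
            Finset.sum_congr rfl fun i _ => by ring
        _ = (∑ i, w i s * c i s) * P s := (Finset.sum_mul _ _ _).symm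
        _ = 0 := by rw [h1 s, zero_mul]
    have T2 : ∀ i : Fin n, ∑ s : ∀ j, Fin (k j), c i s * (c' i s - w i s * P s) = 0 := by
      intro i
      have hki : ((k i : ℝ)) ≠ 0 := by
        have : (0:ℕ) < k i := lt_of_lt_of_le two_pos (hk i)
        exact_mod_cast this.ne'
      have hA := sum_update i (fun s => c i s * (c' i s - w i s * P s))
      have hz : ∑ s : ∀ j, Fin (k j), ∑ x : Fin (k i),
          c i (Function.update s i x) * (c' i (Function.update s i x)
            - w i (Function.update s i x) * P (Function.update s i x)) = 0 := by
        refine Finset.sum_eq_zero fun s _ => ?_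
        calc ∑ x : Fin (k i), c i (Function.update s i x) * (c' i (Function.update s i x)
                - w i (Function.update s i x) * P (Function.update s i x))
            = ∑ x : Fin (k i), c i (Function.update s i x) * (c' i s - w i s * P s) :=
              Finset.sum_congr rfl fun x _ => by rw [key i s x]
          _ = (∑ x : Fin (k i), c i (Function.update s i x)) * (c' i s - w i s * P s) :=
              (Finset.sum_mul _ _ _).symm
          _ = 0 := by rw [h2 i s, zero_mul]
      rw [hz] at hA
      exact ((mul_eq_zero.mp hA.symm).resolve_left hki)
    calc ∑ i : Fin n, ∑ s : ∀ j, Fin (k j), c i s * c' i s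
        = ∑ i : Fin n, ∑ s : ∀ j, Fin (k j),
            (c i s * (w i s * P s) + c i s * (c' i s - w i s * P s)) :=
          Finset.sum_congr rfl fun i _ => Finset.sum_congr rfl fun s _ => by ring
      _ = ∑ i : Fin n, ((∑ s : ∀ j, Fin (k j), c i s * (w i s * P s))
            + ∑ s : ∀ j, Fin (k j), c i s * (c' i s - w i s * P s)) :=
          Finset.sum_congr rfl fun i _ => Finset.sum_add_distrib
      _ = (∑ i : Fin n, ∑ s : ∀ j, Fin (k j), c i s * (w i s * P s))
            + ∑ i : Fin n, ∑ s : ∀ j, Fin (k j), c i s * (c' i s - w i s * P s) :=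
          Finset.sum_add_distrib
      _ = 0 := by rw [T1, Finset.sum_eq_zero fun i _ => T2 i, add_zero]

/-- **Theorem 3.6.** A game `c` is orthogonal to every coset weighted potential game
w.r.t. `w` iff `Σ_i w_i(s_{-i}) c_i(s) = 0` for every `s` and
`Σ_{x∈S_i} c_i(x, s_{-i}) = 0` for every `i` and `s_{-i}`. -/
theorem pure_harmonic_iff (n : ℕ) (hn : 2 ≤ n) (k : Fin n → ℕ)
    (hk : ∀ i, 2 ≤ k i) (w : Fin n → (∀ j, Fin (k j)) → ℝ)
    (hw : ∀ i s, 0 < w i s) (hwI : ∀ i, IndepOf i (w i))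
    (c : Fin n → (∀ j, Fin (k j)) → ℝ) :
    (∀ c' : Fin n → (∀ j, Fin (k j)) → ℝ, IsCWPG w c' → gameInner c c' = 0) ↔
      ((∀ s : ∀ j, Fin (k j), ∑ i : Fin n, w i s * c i s = 0) ∧
       (∀ (i : Fin n) (s : ∀ j, Fin (k j)),
          ∑ x : Fin (k i), c i (Function.update s i x) = 0)) := by
  exact pure_harmonic_iff' n hn k hk w hw (fun i => hwI i) c (IsCWPG w)
    (fun c' => Iff.rfl)
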